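/- arXiv:2010.00895 — 2 statements merged into one kernel-verified Lean document; each statement's English description precedes it below -/
import Mathlib

section
/- Assume ω > v²/(τ²+1)², τ ∈ ℝ \ {0,±1}, v > 0, μ > 0. Then the two infima d(ω) = inf{ S_ω(u) : u ∈ H¹_τ \ {0}, I_ω(u) = 0 } and inf{ S̃(u) : u ∈ H¹_τ \ {0}, I_ω(u) ≤ 0 } coincide, where S̃(u) = (μ/(2(μ+1)))‖u‖^{2μ+2}_{2μ+2}. Moreover, any minimizer of one problem is a minimizer of the other, and any minimizer u of the second problem satisfies I_ω(u) = 0. -/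
open MeasureTheory Set Filter Real

noncomputable section

/-- The space `H¹_τ`: piecewise `H¹` functions on the two half-lines with jump condition
`u(0+) = τ u(0-)` (together with the extra integrability needed for the functionals). -/
structure HtauFun (τ μ : ℝ) where
  u : ℝ → ℝ
  d : ℝ → ℝ
  uL : ℝ
  uR : ℝ
  hderiv : ∀ x : ℝ, x ≠ 0 → HasDerivAt u (d x) x
  hlimL : Tendsto u (nhdsWithin 0 (Iio 0)) (nhds uL)
  hlimR : Tendsto u (nhdsWithin 0 (Ioi 0)) (nhds uR)
  hint2 : Integrable (fun x => (u x) ^ 2)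
  hintd : Integrable (fun x => (d x) ^ 2)
  hintp : Integrable (fun x => |u x| ^ (2 * μ + 2))
  hjump : uR = τ * uL

/-- `‖u'‖₂²` taken piecewise on the two half-lines. -/
def dnormSq (g : ℝ → ℝ) : ℝ :=
  (∫ x in Iio (0:ℝ), (g x) ^ 2) + ∫ x in Ioi (0:ℝ), (g x) ^ 2

/-- `‖u‖₂²`. -/
def l2Sq (f : ℝ → ℝ) : ℝ := ∫ x : ℝ, (f x) ^ 2

/-- `‖u‖_{2μ+2}^{2μ+2}`. -/
def lpP (μ : ℝ) (f : ℝ → ℝ) : ℝ := ∫ x : ℝ, |f x| ^ (2 * μ + 2)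

/-- Squared `H¹_τ` norm. -/
def HnormSq (f g : ℝ → ℝ) : ℝ := l2Sq f + dnormSq g

/-- The Nehari functional `I_ω`. -/
def Ifun (v ω μ : ℝ) (f g : ℝ → ℝ) (aL : ℝ) : ℝ :=
  dnormSq g - lpP μ f - v * aL ^ 2 + ω * l2Sq f

/-- The action functional `S_ω`. -/
def Sfun (v ω μ : ℝ) (f g : ℝ → ℝ) (aL : ℝ) : ℝ :=
  dnormSq g / 2 - lpP μ f / (2 * μ + 2) - v / 2 * aL ^ 2 + ω / 2 * l2Sq f

/-- The reduced action `S̃`. -/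
def StilF (μ : ℝ) (f : ℝ → ℝ) : ℝ := μ / (2 * (μ + 1)) * lpP μ f

/-- `u ≠ 0` as an element of `H¹_τ`. -/
def Nonzero {τ μ : ℝ} (U : HtauFun τ μ) : Prop :=
  ¬ (U.u =ᵐ[volume] fun _ => (0:ℝ))

/-- The ground-state level `d(ω)`: infimum of `S_ω` on the Nehari manifold. -/
def dInf (τ v ω μ : ℝ) : ℝ :=
  sInf {r : ℝ | ∃ U : HtauFun τ μ, Nonzero U ∧
    Ifun v ω μ U.u U.d U.uL = 0 ∧ r = Sfun v ω μ U.u U.d U.uL}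

/-- The level of the second minimization problem: infimum of `S̃` on `{I_ω ≤ 0}`. -/
def dInf' (τ v ω μ : ℝ) : ℝ :=
  sInf {r : ℝ | ∃ U : HtauFun τ μ, Nonzero U ∧
    Ifun v ω μ U.u U.d U.uL ≤ 0 ∧ r = StilF μ U.u}


lemma restrict_compl_zero : volume.restrict ({(0:ℝ)}ᶜ) = volume := by
  rw [Measure.restrict_congr_set (ae_eq_univ.2 (by simp)), Measure.restrict_univ]

lemma split_int (f : ℝ → ℝ) (hf : Integrable f) :
    (∫ x in Iio (0:ℝ), f x) + ∫ x in Ioi (0:ℝ), f x = ∫ x, f x := by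
  rw [← setIntegral_union ((Iio_disjoint_Ici le_rfl).mono_right Ioi_subset_Ici_self)
      measurableSet_Ioi hf.integrableOn hf.integrableOn, Iio_union_Ioi,
    setIntegral_congr_set (ae_eq_univ.2 (by simp)), setIntegral_univ]

lemma aemeas_of_deriv {u d : ℝ → ℝ} (h : ∀ x : ℝ, x ≠ 0 → HasDerivAt u (d x) x) :
    AEMeasurable u (volume : Measure ℝ) := by
  have hc : ContinuousOn u ({(0:ℝ)}ᶜ) := fun x hx =>
    ((h x (by simpa using hx)).continuousAt).continuousWithinAt
  have h2 := hc.aemeasurable (μ := volume) (measurableSet_singleton (0:ℝ)).compl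
  rwa [restrict_compl_zero] at h2

lemma aemeas_d {u d : ℝ → ℝ} (h : ∀ x : ℝ, x ≠ 0 → HasDerivAt u (d x) x) :
    AEMeasurable d (volume : Measure ℝ) := by
  refine (measurable_deriv u).aemeasurable.congr ?_
  have hs : ({x : ℝ | ¬ deriv u x = d x} : Set ℝ) ⊆ {0} := by
    intro x hx
    by_contra hx0
    exact hx ((h x (by simpa using hx0)).deriv)
  exact ae_iff.2 (measure_mono_null hs (measure_singleton 0))

lemma integrable_two_ud {u d : ℝ → ℝ}
    (hmu : AEMeasurable u (volume : Measure ℝ)) (hmd : AEMeasurable d (volume : Measure ℝ))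
    (hint2 : Integrable (fun x => (u x)^2)) (hintd : Integrable (fun x => (d x)^2)) :
    Integrable (fun x => 2 * (u x * d x)) := by
  refine Integrable.mono (hint2.add hintd)
    (((hmu.mul hmd).const_mul 2).aestronglyMeasurable) (Eventually.of_forall fun x => ?_)
  simp only [Real.norm_eq_abs, abs_mul, Pi.add_apply]
  rw [abs_of_nonneg (by positivity : (0:ℝ) ≤ u x ^ 2 + d x ^ 2)]
  rw [abs_two]
  nlinarith [sq_nonneg (|u x| - |d x|), sq_abs (u x), sq_abs (d x)]

lemma trace_left {u d : ℝ → ℝ} {uL : ℝ}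
    (hderiv : ∀ x : ℝ, x ≠ 0 → HasDerivAt u (d x) x)
    (hlim : Tendsto u (nhdsWithin 0 (Iio 0)) (nhds uL))
    (hint2 : Integrable (fun x => (u x)^2)) (hintd : Integrable (fun x => (d x)^2)) :
    uL ^ 2 ≤ ∫ x in Iio (0:ℝ), |2 * (u x * d x)| := by
  have hmu := aemeas_of_deriv hderiv
  have hmd := aemeas_d hderiv
  have hudI : Integrable (fun x => 2 * (u x * d x)) := integrable_two_ud hmu hmd hint2 hintd
  have hprod : Integrable (fun x => |2 * (u x * d x)|) := hudI.abs
  set C := ∫ x in Iio (0:ℝ), |2 * (u x * d x)| with hC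
  suffices h : ∀ ε > 0, uL ^ 2 ≤ C + ε by
    by_contra hcon
    push_neg at hcon
    linarith [h ((uL ^ 2 - C) / 2) (by linarith)]
  intro ε hε
  have hexa : ∃ a : ℝ, a < 0 ∧ u a ^ 2 ≤ ε := by
    by_contra hcon
    push_neg at hcon
    have hconst : Integrable (fun _ : ℝ => ε) (volume.restrict (Iio (0:ℝ))) := by
      refine Integrable.mono' (hint2.restrict (s := Iio 0)) aestronglyMeasurable_const ?_
      refine (ae_restrict_iff' measurableSet_Iio).2 (Eventually.of_forall fun x hx => ?_)
      rw [Real.norm_eq_abs, abs_of_pos hε]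
      exact (hcon x hx).le
    rcases integrable_const_iff.1 hconst with h0 | h0
    · exact hε.ne' h0
    · rw [isFiniteMeasure_restrict, Real.volume_Iio] at h0
      exact h0 rfl
  obtain ⟨a, ha0, haε⟩ := hexa
  have key : ∀ x ∈ Ioo a (0:ℝ), u x ^ 2 ≤ C + ε := by
    intro x hx
    have hax : a < x := hx.1
    have hx0 : x < 0 := hx.2
    have hFTC : ∫ y in a..x, 2 * (u y * d y) = u x ^ 2 - u a ^ 2 := by
      refine intervalIntegral.integral_eq_sub_of_hasDerivAt (f := fun z => u z ^ 2) (fun y hy => ?_)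
        hudI.intervalIntegrable
      rw [uIcc_of_le hax.le] at hy
      have hy0 : y ≠ 0 := (hy.2.trans_lt hx0).ne
      have h2 : HasDerivAt (fun z => u z ^ 2) (((2:ℕ):ℝ) * u y ^ (2 - 1) * d y) y :=
        (hderiv y hy0).pow 2
      refine h2.congr_deriv ?_
      push_cast
      ring
    have h2 : |∫ y in a..x, 2 * (u y * d y)| ≤ ∫ y in a..x, |2 * (u y * d y)| :=
      intervalIntegral.abs_integral_le_integral_abs hax.le
    have h3 : (∫ y in a..x, |2 * (u y * d y)|) ≤ C := by
      rw [intervalIntegral.integral_of_le hax.le]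
      refine setIntegral_mono_set hprod.integrableOn
        (Eventually.of_forall fun y => abs_nonneg _) ?_
      exact HasSubset.Subset.eventuallyLE (fun y hy => lt_of_le_of_lt hy.2 hx0)
    have h4 := le_abs_self (∫ y in a..x, 2 * (u y * d y))
    have h1 : u x ^ 2 = u a ^ 2 + ∫ y in a..x, 2 * (u y * d y) := by rw [hFTC]; ring
    linarith
  have hT : Tendsto (fun x => u x ^ 2) (nhdsWithin 0 (Iio 0)) (nhds (uL ^ 2)) := hlim.pow 2
  exact le_of_tendsto hT (mem_of_superset (Ioo_mem_nhdsLT ha0) key)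

lemma trace_right {u d : ℝ → ℝ} {uR : ℝ}
    (hderiv : ∀ x : ℝ, x ≠ 0 → HasDerivAt u (d x) x)
    (hlim : Tendsto u (nhdsWithin 0 (Ioi 0)) (nhds uR))
    (hint2 : Integrable (fun x => (u x)^2)) (hintd : Integrable (fun x => (d x)^2)) :
    uR ^ 2 ≤ ∫ x in Ioi (0:ℝ), |2 * (u x * d x)| := by
  have hmu := aemeas_of_deriv hderiv
  have hmd := aemeas_d hderiv
  have hudI : Integrable (fun x => 2 * (u x * d x)) := integrable_two_ud hmu hmd hint2 hintd
  have hprod : Integrable (fun x => |2 * (u x * d x)|) := hudI.abs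
  set C := ∫ x in Ioi (0:ℝ), |2 * (u x * d x)| with hC
  suffices h : ∀ ε > 0, uR ^ 2 ≤ C + ε by
    by_contra hcon
    push_neg at hcon
    linarith [h ((uR ^ 2 - C) / 2) (by linarith)]
  intro ε hε
  have hexa : ∃ b : ℝ, 0 < b ∧ u b ^ 2 ≤ ε := by
    by_contra hcon
    push_neg at hcon
    have hconst : Integrable (fun _ : ℝ => ε) (volume.restrict (Ioi (0:ℝ))) := by
      refine Integrable.mono' (hint2.restrict (s := Ioi 0)) aestronglyMeasurable_const ?_
      refine (ae_restrict_iff' measurableSet_Ioi).2 (Eventually.of_forall fun x hx => ?_)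
      rw [Real.norm_eq_abs, abs_of_pos hε]
      exact (hcon x hx).le
    rcases integrable_const_iff.1 hconst with h0 | h0
    · exact hε.ne' h0
    · rw [isFiniteMeasure_restrict, Real.volume_Ioi] at h0
      exact h0 rfl
  obtain ⟨b, hb0, hbε⟩ := hexa
  have key : ∀ x ∈ Ioo (0:ℝ) b, u x ^ 2 ≤ C + ε := by
    intro x hx
    have hxb : x < b := hx.2
    have hx0 : 0 < x := hx.1
    have hFTC : ∫ y in x..b, 2 * (u y * d y) = u b ^ 2 - u x ^ 2 := by
      refine intervalIntegral.integral_eq_sub_of_hasDerivAt (f := fun z => u z ^ 2) (fun y hy => ?_)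
        hudI.intervalIntegrable
      rw [uIcc_of_le hxb.le] at hy
      have hy0 : y ≠ 0 := (lt_of_lt_of_le hx0 hy.1).ne'
      have h2 : HasDerivAt (fun z => u z ^ 2) (((2:ℕ):ℝ) * u y ^ (2 - 1) * d y) y :=
        (hderiv y hy0).pow 2
      refine h2.congr_deriv ?_
      push_cast
      ring
    have h2 : |∫ y in x..b, 2 * (u y * d y)| ≤ ∫ y in x..b, |2 * (u y * d y)| :=
      intervalIntegral.abs_integral_le_integral_abs hxb.le
    have h3 : (∫ y in x..b, |2 * (u y * d y)|) ≤ C := by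
      rw [intervalIntegral.integral_of_le hxb.le]
      refine setIntegral_mono_set hprod.integrableOn
        (Eventually.of_forall fun y => abs_nonneg _) ?_
      exact HasSubset.Subset.eventuallyLE (fun y hy => lt_trans hx0 hy.1)
    have h4 := neg_abs_le (∫ y in x..b, 2 * (u y * d y))
    have h1 : u x ^ 2 = u b ^ 2 - ∫ y in x..b, 2 * (u y * d y) := by rw [hFTC]; ring
    linarith
  have hT : Tendsto (fun x => u x ^ 2) (nhdsWithin 0 (Ioi 0)) (nhds (uR ^ 2)) := hlim.pow 2
  exact le_of_tendsto hT (mem_of_superset (Ioo_mem_nhdsGT hb0) key)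

lemma lpP_nonneg (μ : ℝ) (f : ℝ → ℝ) : 0 ≤ lpP μ f :=
  integral_nonneg fun x => Real.rpow_nonneg (abs_nonneg _) _

lemma StilF_nonneg {μ : ℝ} (hμ : 0 < μ) (f : ℝ → ℝ) : 0 ≤ StilF μ f :=
  mul_nonneg (by positivity) (lpP_nonneg μ f)

lemma l2Sq_pos {τ μ : ℝ} (U : HtauFun τ μ) (hU : Nonzero U) : 0 < l2Sq U.u := by
  have hnn : 0 ≤ l2Sq U.u := integral_nonneg fun x => sq_nonneg _
  rcases hnn.lt_or_eq with h | h
  · exact h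
  · exfalso
    apply hU
    have h0 : (∫ x, (U.u x) ^ 2) = 0 := h.symm
    have := (integral_eq_zero_iff_of_nonneg (fun x => sq_nonneg (U.u x)) U.hint2).1 h0
    filter_upwards [this] with x hx
    exact pow_eq_zero_iff (n := 2) (by norm_num) |>.1 hx

lemma Qpos {τ v ω μ : ℝ} (hv : 0 < v) (hω : ω > v ^ 2 / (τ ^ 2 + 1) ^ 2)
    (U : HtauFun τ μ) (hU : Nonzero U) :
    0 < dnormSq U.d - v * U.uL ^ 2 + ω * l2Sq U.u := by
  have hτ1 : (0:ℝ) < τ ^ 2 + 1 := by positivity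
  set c := v / (τ ^ 2 + 1) with hc
  have hc0 : 0 < c := div_pos hv hτ1
  have hmu := aemeas_of_deriv U.hderiv
  have hmd := aemeas_d U.hderiv
  have hudI := integrable_two_ud hmu hmd U.hint2 U.hintd
  have hL := trace_left U.hderiv U.hlimL U.hint2 U.hintd
  have hR := trace_right U.hderiv U.hlimR U.hint2 U.hintd
  have hsplit : (∫ x in Iio (0:ℝ), |2 * (U.u x * U.d x)|)
      + ∫ x in Ioi (0:ℝ), |2 * (U.u x * U.d x)| = ∫ x, |2 * (U.u x * U.d x)| :=
    split_int _ hudI.abs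
  have hmono : c * (∫ x, |2 * (U.u x * U.d x)|)
      ≤ (∫ x, (U.d x) ^ 2) + c ^ 2 * ∫ x, (U.u x) ^ 2 := by
    rw [← integral_const_mul, ← integral_const_mul]
    rw [← integral_add U.hintd (U.hint2.const_mul _)]
    refine integral_mono (hudI.abs.const_mul c) (U.hintd.add (U.hint2.const_mul _)) fun x => ?_
    have habs : |2 * (U.u x * U.d x)| = 2 * (|U.u x| * |U.d x|) := by
      rw [abs_mul, abs_mul, abs_two]
    rw [habs]
    nlinarith [sq_nonneg (c * |U.u x| - |U.d x|), sq_abs (U.u x), sq_abs (U.d x)]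
  have hdn : dnormSq U.d = ∫ x, (U.d x) ^ 2 := split_int _ U.hintd
  have hl2 : 0 < l2Sq U.u := l2Sq_pos U hU
  have htr : v * U.uL ^ 2 ≤ (∫ x, (U.d x) ^ 2) + c ^ 2 * l2Sq U.u := by
    have h1 : v * U.uL ^ 2 = c * (U.uL ^ 2 + U.uR ^ 2) := by
      rw [U.hjump, hc]
      field_simp
      ring
    calc v * U.uL ^ 2 = c * (U.uL ^ 2 + U.uR ^ 2) := h1
      _ ≤ c * ((∫ x in Iio (0:ℝ), |2 * (U.u x * U.d x)|)
            + ∫ x in Ioi (0:ℝ), |2 * (U.u x * U.d x)|) :=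
        mul_le_mul_of_nonneg_left (add_le_add hL hR) hc0.le
      _ = c * ∫ x, |2 * (U.u x * U.d x)| := by rw [hsplit]
      _ ≤ (∫ x, (U.d x) ^ 2) + c ^ 2 * l2Sq U.u := hmono
  have hω' : c ^ 2 < ω := by rw [hc, div_pow]; exact hω
  have hQ : dnormSq U.d - v * U.uL ^ 2 + ω * l2Sq U.u
      ≥ (ω - c ^ 2) * l2Sq U.u := by
    rw [hdn]
    have : l2Sq U.u = ∫ x, (U.u x) ^ 2 := rfl
    nlinarith [htr]
  nlinarith [hQ, mul_pos (sub_pos.2 hω') hl2]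

/-- Scalar multiplication on `H¹_τ`. -/
def HtauFun.smulF {τ μ : ℝ} (α : ℝ) (U : HtauFun τ μ) : HtauFun τ μ where
  u := fun x => α * U.u x
  d := fun x => α * U.d x
  uL := α * U.uL
  uR := α * U.uR
  hderiv := fun x hx => (U.hderiv x hx).const_mul α
  hlimL := U.hlimL.const_mul α
  hlimR := U.hlimR.const_mul α
  hint2 := by simpa [mul_pow] using U.hint2.const_mul (α ^ 2)
  hintd := by simpa [mul_pow] using U.hintd.const_mul (α ^ 2)
  hintp := by
    refine (U.hintp.const_mul (|α| ^ (2 * μ + 2))).congr (Eventually.of_forall fun x => ?_)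
    show |α| ^ (2 * μ + 2) * |U.u x| ^ (2 * μ + 2) = |α * U.u x| ^ (2 * μ + 2)
    rw [← Real.mul_rpow (abs_nonneg _) (abs_nonneg _), ← abs_mul]
  hjump := by rw [U.hjump]; ring

lemma smulF_u {τ μ : ℝ} (α : ℝ) (U : HtauFun τ μ) :
    (U.smulF α).u = fun x => α * U.u x := rfl

lemma l2Sq_smul {τ μ : ℝ} (α : ℝ) (U : HtauFun τ μ) :
    l2Sq (U.smulF α).u = α ^ 2 * l2Sq U.u := by
  unfold l2Sq
  rw [show (U.smulF α).u = fun x => α * U.u x from rfl]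
  simp only [mul_pow]
  exact integral_const_mul _ _

lemma dnormSq_smul {τ μ : ℝ} (α : ℝ) (U : HtauFun τ μ) :
    dnormSq (U.smulF α).d = α ^ 2 * dnormSq U.d := by
  unfold dnormSq
  rw [show (U.smulF α).d = fun x => α * U.d x from rfl]
  simp only [mul_pow]
  rw [integral_const_mul, integral_const_mul, mul_add]

lemma lpP_smul {τ μ : ℝ} (α : ℝ) (U : HtauFun τ μ) :
    lpP μ (U.smulF α).u = |α| ^ (2 * μ + 2) * lpP μ U.u := by
  unfold lpP
  rw [show (U.smulF α).u = fun x => α * U.u x from rfl]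
  simp only [abs_mul, Real.mul_rpow (abs_nonneg α) (abs_nonneg _)]
  exact integral_const_mul _ _

lemma StilF_smul {τ μ : ℝ} (α : ℝ) (U : HtauFun τ μ) :
    StilF μ (U.smulF α).u = |α| ^ (2 * μ + 2) * StilF μ U.u := by
  unfold StilF
  rw [lpP_smul]
  ring

lemma Nonzero_smul {τ μ : ℝ} {α : ℝ} (hα : α ≠ 0) (U : HtauFun τ μ) (hU : Nonzero U) :
    Nonzero (U.smulF α) := by
  intro h
  apply hU
  rw [show (U.smulF α).u = fun x => α * U.u x from rfl] at h
  filter_upwards [h] with x hx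
  exact (mul_eq_zero.1 hx).resolve_left hα

/-- On the Nehari manifold, `S_ω = S̃`. -/
lemma Sfun_eq_StilF {v ω μ : ℝ} (hμ : 0 < μ) (f g : ℝ → ℝ) (aL : ℝ)
    (hI : Ifun v ω μ f g aL = 0) : Sfun v ω μ f g aL = StilF μ f := by
  unfold Ifun at hI
  unfold Sfun StilF
  have h1 : dnormSq g = lpP μ f + v * aL ^ 2 - ω * l2Sq f := by linarith
  rw [h1]
  have h2 : (2 * μ + 2) ≠ 0 := by positivity
  have h3 : (2 * (μ + 1)) ≠ 0 := by positivity
  field_simp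
  ring

/-- Key scaling step. -/
lemma key_step {τ v ω μ : ℝ} (hv : 0 < v) (hμ : 0 < μ)
    (hω : ω > v ^ 2 / (τ ^ 2 + 1) ^ 2)
    (U : HtauFun τ μ) (hU : Nonzero U) (hI : Ifun v ω μ U.u U.d U.uL ≤ 0) :
    ∃ W : HtauFun τ μ, Nonzero W ∧ Ifun v ω μ W.u W.d W.uL = 0 ∧
      StilF μ W.u ≤ StilF μ U.u ∧
      (Ifun v ω μ U.u U.d U.uL < 0 → StilF μ W.u < StilF μ U.u) := by
  rcases hI.lt_or_eq with hI | hI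
  swap
  · exact ⟨U, hU, hI, le_rfl, fun h => absurd hI h.ne⟩
  set Q := dnormSq U.d - v * U.uL ^ 2 + ω * l2Sq U.u with hQdef
  set P := lpP μ U.u with hPdef
  have hQ : 0 < Q := Qpos hv hω U hU
  have hIeq : Ifun v ω μ U.u U.d U.uL = Q - P := by unfold Ifun; rw [hQdef, hPdef]; ring
  have hQP : Q < P := by rw [hIeq] at hI; linarith
  have hP : 0 < P := hQ.trans hQP
  set α := (Q / P) ^ ((2 * μ)⁻¹ : ℝ) with hαdef
  have hQP1 : Q / P < 1 := (div_lt_one hP).2 hQP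
  have hQP0 : 0 < Q / P := div_pos hQ hP
  have hα0 : 0 < α := Real.rpow_pos_of_pos hQP0 _
  have hα1 : α < 1 := Real.rpow_lt_one hQP0.le hQP1 (by positivity)
  have hαpow : α ^ ((2 * μ : ℝ)) = Q / P := by
    rw [hαdef, ← Real.rpow_mul hQP0.le, inv_mul_cancel₀ (by positivity : (2*μ : ℝ) ≠ 0),
      Real.rpow_one]
  have habs : |α| = α := abs_of_pos hα0
  have hα2 : α ^ (2 * μ + 2 : ℝ) = Q / P * α ^ 2 := by
    rw [Real.rpow_add hα0, hαpow, Real.rpow_two]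
  have hSU : 0 < StilF μ U.u := by
    unfold StilF
    rw [← hPdef]
    positivity
  have hα21 : α ^ 2 < 1 := by nlinarith
  have hfac : Q / P * α ^ 2 < 1 := by nlinarith
  have hfac0 : 0 < Q / P * α ^ 2 := by positivity
  refine ⟨U.smulF α, Nonzero_smul hα0.ne' U hU, ?_, ?_, fun _ => ?_⟩
  · unfold Ifun
    rw [dnormSq_smul, lpP_smul, l2Sq_smul, habs, hα2,
      show (U.smulF α).uL = α * U.uL from rfl, ← hPdef]
    have hc : Q / P * α ^ 2 * P = Q * α ^ 2 := by field_simp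
    rw [hc, hQdef]
    ring
  · rw [StilF_smul, habs, hα2]
    nlinarith
  · rw [StilF_smul, habs, hα2]
    nlinarith

/-- the two minimization problems (action on the Nehari manifold, reduced action
on `{I_ω ≤ 0}`) have the same infimum, minimizers of one are minimizers of the other, and any
minimizer of the second problem lies on the Nehari manifold. -/
theorem nehari_equivalence
    (τ v ω μ : ℝ) (hτ0 : τ ≠ 0) (hτ1 : τ ≠ 1) (hτm1 : τ ≠ -1)
    (hv : 0 < v) (hμ : 0 < μ) (hω : ω > v ^ 2 / (τ ^ 2 + 1) ^ 2) :
    dInf τ v ω μ = dInf' τ v ω μ ∧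
    (∀ U : HtauFun τ μ, Nonzero U → Ifun v ω μ U.u U.d U.uL = 0 →
      Sfun v ω μ U.u U.d U.uL = dInf τ v ω μ → StilF μ U.u = dInf' τ v ω μ) ∧
    (∀ U : HtauFun τ μ, Nonzero U → Ifun v ω μ U.u U.d U.uL ≤ 0 →
      StilF μ U.u = dInf' τ v ω μ →
        Ifun v ω μ U.u U.d U.uL = 0 ∧ Sfun v ω μ U.u U.d U.uL = dInf τ v ω μ) := by
  have hμ2 := hμ
  set A := {r : ℝ | ∃ U : HtauFun τ μ, Nonzero U ∧
    Ifun v ω μ U.u U.d U.uL = 0 ∧ r = Sfun v ω μ U.u U.d U.uL} with hA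
  set B := {r : ℝ | ∃ U : HtauFun τ μ, Nonzero U ∧
    Ifun v ω μ U.u U.d U.uL ≤ 0 ∧ r = StilF μ U.u} with hB
  have hdA : dInf τ v ω μ = sInf A := rfl
  have hdB : dInf' τ v ω μ = sInf B := rfl
  have hAB : A ⊆ B := by
    rintro r ⟨U, hnz, hI, rfl⟩
    exact ⟨U, hnz, hI.le, Sfun_eq_StilF hμ _ _ _ hI⟩
  have hBbd : BddBelow B := by
    refine ⟨0, ?_⟩
    rintro r ⟨U, hnz, hI, rfl⟩
    exact StilF_nonneg hμ _
  have hAbd : BddBelow A := hBbd.mono hAB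
  have hBA : ∀ r ∈ B, ∃ r' ∈ A, r' ≤ r := by
    rintro r ⟨U, hnz, hI, rfl⟩
    obtain ⟨W, hWnz, hWI, hWle, _⟩ := key_step hv hμ hω U hnz hI
    exact ⟨Sfun v ω μ W.u W.d W.uL, ⟨W, hWnz, hWI, rfl⟩,
      by rw [Sfun_eq_StilF hμ _ _ _ hWI]; exact hWle⟩
  have h1 : dInf τ v ω μ = dInf' τ v ω μ := by
    rcases eq_empty_or_nonempty B with hBe | hBne
    · have hAe : A = ∅ := eq_empty_of_subset_empty (hBe ▸ hAB)
      rw [hdA, hdB, hAe, hBe]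
    · obtain ⟨b, hb⟩ := hBne
      obtain ⟨a, haA, hab⟩ := hBA b hb
      rw [hdA, hdB]
      refine le_antisymm ?_ (csInf_le_csInf hBbd ⟨a, haA⟩ hAB)
      refine le_csInf ⟨b, hb⟩ fun r hr => ?_
      obtain ⟨r', hr'A, hr'le⟩ := hBA r hr
      exact (csInf_le hAbd hr'A).trans hr'le
  refine ⟨h1, fun U hnz hI hS => ?_, fun U hnz hI hS => ?_⟩
  · rw [← Sfun_eq_StilF hμ _ _ _ hI, hS, h1]
  · have hI0 : Ifun v ω μ U.u U.d U.uL = 0 := by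
      by_contra hne
      have hlt : Ifun v ω μ U.u U.d U.uL < 0 := lt_of_le_of_ne hI hne
      obtain ⟨W, hWnz, hWI, _, hWlt⟩ := key_step hv hμ hω U hnz hI
      have hWB : StilF μ W.u ∈ B := ⟨W, hWnz, hWI.le, rfl⟩
      have h3 : dInf' τ v ω μ ≤ StilF μ W.u := by rw [hdB]; exact csInf_le hBbd hWB
      have h2 := hWlt hlt
      rw [hS] at h2
      linarith
    refine ⟨hI0, ?_⟩
    rw [Sfun_eq_StilF hμ _ _ _ hI0, hS, h1]
end
end

section
/- Let ω > v²/(τ²+1)², τ ∈ ℝ \ {0,±1}, v > 0, μ > 0, and let (u_n) be a minimizing sequence for S̃ over {u ∈ H¹_τ \ {0} : I_ω(u) ≤ 0}. Then lim_{n→∞} I_ω(u_n) = 0. -/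
open MeasureTheory Set Filter Real

noncomputable section

namespace HtauFun

variable {τ μ : ℝ} (U : HtauFun τ μ)

lemma aemeas_u : AEMeasurable U.u := by
  have h1 : ContinuousOn U.u ({0}ᶜ : Set ℝ) := fun x hx =>
    (U.hderiv x hx).continuousAt.continuousWithinAt
  have h2 : AEMeasurable U.u (volume.restrict ({0}ᶜ : Set ℝ)) :=
    h1.aemeasurable (measurableSet_singleton 0).compl
  have h3 : volume.restrict ({0}ᶜ : Set ℝ) = volume := by
    apply Measure.restrict_eq_self_of_ae_mem
    have : volume ({0} : Set ℝ) = 0 := measure_singleton 0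
    rw [ae_iff]
    simpa using this
  rwa [h3] at h2

lemma aemeas_d : AEMeasurable U.d := by
  have h1 : U.d =ᵐ[volume] deriv U.u := by
    have : ∀ᵐ x : ℝ, x ≠ 0 := by
      rw [ae_iff]; simpa using measure_singleton (0:ℝ)
    filter_upwards [this] with x hx
    exact ((U.hderiv x hx).deriv).symm
  exact (measurable_deriv U.u).aemeasurable.congr h1.symm

lemma integrable_mul : Integrable (fun x => 2 * U.u x * U.d x) := by
  apply Integrable.mono' (U.hint2.add U.hintd)
  · exact ((aemeasurable_const.mul U.aemeas_u).mul U.aemeas_d).aestronglyMeasurable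
  · refine .of_forall fun x => ?_
    rw [Real.norm_eq_abs, abs_le, Pi.add_apply]
    constructor <;> nlinarith [sq_nonneg (U.u x + U.d x), sq_nonneg (U.u x - U.d x)]

lemma tendsto_usq_atTop : Tendsto (fun x => U.u x ^ 2) atTop
    (nhds (U.u 1 ^ 2 + ∫ t in Ioi (1:ℝ), 2 * U.u t * U.d t)) := by
  have key : ∀ x : ℝ, 1 ≤ x →
      U.u x ^ 2 = U.u 1 ^ 2 + ∫ t in (1:ℝ)..x, 2 * U.u t * U.d t := by
    intro x hx
    have hd : ∀ t ∈ uIcc (1:ℝ) x, HasDerivAt (fun y => U.u y ^ 2) (2 * U.u t * U.d t) t := by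
      intro t ht
      rw [uIcc_of_le hx] at ht
      have hne : t ≠ 0 := by have := ht.1; intro h; rw [h] at this; linarith
      have h := (U.hderiv t hne).mul (U.hderiv t hne)
      have heq : (fun y => U.u y ^ 2) = fun y => U.u y * U.u y := by
        funext y; ring
      rw [heq]
      exact h.congr_deriv (by ring)
    have := intervalIntegral.integral_eq_sub_of_hasDerivAt hd U.integrable_mul.intervalIntegrable
    rw [this]; ring
  have h2 : Tendsto (fun x => U.u 1 ^ 2 + ∫ t in (1:ℝ)..x, 2 * U.u t * U.d t) atTop
      (nhds (U.u 1 ^ 2 + ∫ t in Ioi (1:ℝ), 2 * U.u t * U.d t)) := by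
    exact (intervalIntegral_tendsto_integral_Ioi 1 U.integrable_mul.integrableOn
      tendsto_id).const_add _
  refine h2.congr' ?_
  filter_upwards [eventually_ge_atTop (1:ℝ)] with x hx
  exact (key x hx).symm

lemma tendsto_usq_atBot : Tendsto (fun x => U.u x ^ 2) atBot
    (nhds (U.u (-1) ^ 2 - ∫ t in Iic (-1:ℝ), 2 * U.u t * U.d t)) := by
  have key : ∀ x : ℝ, x ≤ -1 →
      U.u x ^ 2 = U.u (-1) ^ 2 - ∫ t in x..(-1:ℝ), 2 * U.u t * U.d t := by
    intro x hx
    have hd : ∀ t ∈ uIcc x (-1:ℝ), HasDerivAt (fun y => U.u y ^ 2) (2 * U.u t * U.d t) t := by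
      intro t ht
      rw [uIcc_of_le hx] at ht
      have hne : t ≠ 0 := by have := ht.2; intro h; rw [h] at this; linarith
      have h := (U.hderiv t hne).mul (U.hderiv t hne)
      have heq : (fun y => U.u y ^ 2) = fun y => U.u y * U.u y := by
        funext y; ring
      rw [heq]
      exact h.congr_deriv (by ring)
    have := intervalIntegral.integral_eq_sub_of_hasDerivAt hd U.integrable_mul.intervalIntegrable
    rw [this]; ring
  have h2 : Tendsto (fun x => U.u (-1) ^ 2 - ∫ t in x..(-1:ℝ), 2 * U.u t * U.d t) atBot
      (nhds (U.u (-1) ^ 2 - ∫ t in Iic (-1:ℝ), 2 * U.u t * U.d t)) := by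
    exact (intervalIntegral_tendsto_integral_Iic (-1) U.integrable_mul.integrableOn
      tendsto_id).const_sub _
  refine h2.congr' ?_
  filter_upwards [eventually_le_atBot (-1:ℝ)] with x hx
  exact (key x hx).symm

end HtauFun

/-- If an integrable nonneg function tends to `m` at `atTop`, then `m = 0`. -/
lemma limit_zero_atTop {f : ℝ → ℝ} (hf : Integrable f) (h0 : ∀ x, 0 ≤ f x) {m : ℝ}
    (hm : Tendsto f atTop (nhds m)) : m = 0 := by
  by_contra hne
  have hm0 : 0 ≤ m := ge_of_tendsto hm (.of_forall h0)
  have hmpos : 0 < m := lt_of_le_of_ne hm0 (Ne.symm hne)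
  have hev : ∀ᶠ x in atTop, m / 2 < f x := hm.eventually (eventually_gt_nhds (by linarith))
  obtain ⟨M, hM⟩ := hev.exists_forall_of_atTop
  have hconst : Integrable (fun _ : ℝ => m / 2) (volume.restrict (Ici M)) := by
    apply Integrable.mono' hf.restrict aestronglyMeasurable_const
    rw [ae_restrict_iff' measurableSet_Ici]
    refine .of_forall fun x hx => ?_
    rw [Real.norm_eq_abs, abs_of_nonneg (by linarith : (0:ℝ) ≤ m/2)]
    exact (hM x hx).le
  rw [integrable_const_iff] at hconst
  rcases hconst with h | h
  · exact absurd h (by positivity)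
  · rw [isFiniteMeasure_restrict, Real.volume_Ici] at h
    exact absurd h (by simp)

lemma limit_zero_atBot {f : ℝ → ℝ} (hf : Integrable f) (h0 : ∀ x, 0 ≤ f x) {m : ℝ}
    (hm : Tendsto f atBot (nhds m)) : m = 0 := by
  by_contra hne
  have hm0 : 0 ≤ m := ge_of_tendsto hm (.of_forall h0)
  have hmpos : 0 < m := lt_of_le_of_ne hm0 (Ne.symm hne)
  have hev : ∀ᶠ x in atBot, m / 2 < f x := hm.eventually (eventually_gt_nhds (by linarith))
  obtain ⟨M, hM⟩ := hev.exists_forall_of_atBot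
  have hconst : Integrable (fun _ : ℝ => m / 2) (volume.restrict (Iic M)) := by
    apply Integrable.mono' hf.restrict aestronglyMeasurable_const
    rw [ae_restrict_iff' measurableSet_Iic]
    refine .of_forall fun x hx => ?_
    rw [Real.norm_eq_abs, abs_of_nonneg (by linarith : (0:ℝ) ≤ m/2)]
    exact (hM x hx).le
  rw [integrable_const_iff] at hconst
  rcases hconst with h | h
  · exact absurd h (by positivity)
  · rw [isFiniteMeasure_restrict, Real.volume_Iic] at h
    exact absurd h (by simp)

namespace HtauFun

variable {τ μ : ℝ} (U : HtauFun τ μ)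

lemma usq_tendsto_zero_atTop : Tendsto (fun x => U.u x ^ 2) atTop (nhds 0) := by
  have h := U.tendsto_usq_atTop
  have := limit_zero_atTop U.hint2 (fun x => sq_nonneg _) h
  rwa [this] at h

lemma usq_tendsto_zero_atBot : Tendsto (fun x => U.u x ^ 2) atBot (nhds 0) := by
  have h := U.tendsto_usq_atBot
  have := limit_zero_atBot U.hint2 (fun x => sq_nonneg _) h
  rwa [this] at h

/-- Right trace identity: `∫_{(0,∞)} 2 u u' = -uR²`. -/
lemma integral_right : ∫ x in Ioi (0:ℝ), 2 * U.u x * U.d x = -U.uR ^ 2 := by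
  set g : ℝ → ℝ := fun x => if x = 0 then U.uR ^ 2 else U.u x ^ 2 with hg
  have hg0 : g 0 = U.uR ^ 2 := if_pos rfl
  have hcont : ContinuousWithinAt g (Ici 0) 0 := by
    rw [ContinuousWithinAt, hg0, ← Set.Ioi_insert, nhdsWithin_insert, tendsto_sup]
    constructor
    · simpa [hg0] using tendsto_pure_nhds g 0
    · refine (U.hlimR.pow 2).congr' ?_
      filter_upwards [self_mem_nhdsWithin] with x hx
      exact (if_neg (ne_of_gt hx)).symm
  have hderiv : ∀ x ∈ Ioi (0:ℝ), HasDerivAt g (2 * U.u x * U.d x) x := by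
    intro x hx
    have hne : x ≠ 0 := ne_of_gt hx
    have h := (U.hderiv x hne).mul (U.hderiv x hne)
    have hu2 : HasDerivAt (fun y => U.u y ^ 2) (2 * U.u x * U.d x) x := by
      have heq : (fun y => U.u y ^ 2) = fun y => U.u y * U.u y := by funext y; ring
      rw [heq]; exact h.congr_deriv (by ring)
    refine hu2.congr_of_eventuallyEq ?_
    filter_upwards [eventually_ne_nhds hne] with y hy
    exact if_neg hy
  have htop : Tendsto g atTop (nhds 0) := by
    refine U.usq_tendsto_zero_atTop.congr' ?_
    filter_upwards [eventually_ge_atTop (1:ℝ)] with x hx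
    exact (if_neg (by intro h; rw [h] at hx; linarith)).symm
  have := integral_Ioi_of_hasDerivAt_of_tendsto hcont hderiv
    U.integrable_mul.integrableOn htop
  rw [this, hg0]; ring

/-- Left trace identity: `∫_{(-∞,0)} 2 u u' = uL²`. -/
lemma integral_left : ∫ x in Iio (0:ℝ), 2 * U.u x * U.d x = U.uL ^ 2 := by
  set g : ℝ → ℝ := fun x => if x = 0 then U.uL ^ 2 else U.u x ^ 2 with hg
  have hg0 : g 0 = U.uL ^ 2 := if_pos rfl
  have hcont : ContinuousWithinAt g (Iic 0) 0 := by
    rw [ContinuousWithinAt, hg0, ← Set.Iio_insert, nhdsWithin_insert, tendsto_sup]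
    constructor
    · simpa [hg0] using tendsto_pure_nhds g 0
    · refine (U.hlimL.pow 2).congr' ?_
      filter_upwards [self_mem_nhdsWithin] with x hx
      exact (if_neg (ne_of_lt hx)).symm
  have hderiv : ∀ x ∈ Iio (0:ℝ), HasDerivAt g (2 * U.u x * U.d x) x := by
    intro x hx
    have hne : x ≠ 0 := ne_of_lt hx
    have h := (U.hderiv x hne).mul (U.hderiv x hne)
    have hu2 : HasDerivAt (fun y => U.u y ^ 2) (2 * U.u x * U.d x) x := by
      have heq : (fun y => U.u y ^ 2) = fun y => U.u y * U.u y := by funext y; ring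
      rw [heq]; exact h.congr_deriv (by ring)
    refine hu2.congr_of_eventuallyEq ?_
    filter_upwards [eventually_ne_nhds hne] with y hy
    exact if_neg hy
  have hbot : Tendsto g atBot (nhds 0) := by
    refine U.usq_tendsto_zero_atBot.congr' ?_
    filter_upwards [eventually_le_atBot (-1:ℝ)] with x hx
    exact (if_neg (by intro h; rw [h] at hx; linarith)).symm
  have := integral_Iic_of_hasDerivAt_of_tendsto hcont hderiv
    U.integrable_mul.integrableOn hbot
  rw [MeasureTheory.integral_Iic_eq_integral_Iio] at this
  rw [this, hg0]; ring

end HtauFun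

namespace HtauFun

variable {τ v ω μ : ℝ} (U : HtauFun τ μ)

lemma uR_sq_le {a : ℝ} (ha : 0 < a) :
    U.uR ^ 2 ≤ a * (∫ x in Ioi (0:ℝ), U.d x ^ 2) + a⁻¹ * ∫ x in Ioi (0:ℝ), U.u x ^ 2 := by
  have h1 : U.uR ^ 2 = ∫ x in Ioi (0:ℝ), -(2 * U.u x * U.d x) := by
    rw [MeasureTheory.integral_neg, U.integral_right]; ring
  have h2 : (∫ x in Ioi (0:ℝ), -(2 * U.u x * U.d x)) ≤
      ∫ x in Ioi (0:ℝ), (a * U.d x ^ 2 + a⁻¹ * U.u x ^ 2) := by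
    apply integral_mono U.integrable_mul.neg.integrableOn
      ((U.hintd.const_mul a).add (U.hint2.const_mul a⁻¹)).integrableOn
    intro x
    simp only [Pi.add_apply, Pi.neg_apply]
    have h2 : 0 ≤ (a * U.d x + U.u x) ^ 2 / a := div_nonneg (sq_nonneg _) ha.le
    have h3 : (a * U.d x + U.u x) ^ 2 / a
        = a * U.d x ^ 2 + 2 * U.u x * U.d x + a⁻¹ * U.u x ^ 2 := by
      field_simp; ring
    linarith [h3 ▸ h2]
  rw [h1]
  calc (∫ x in Ioi (0:ℝ), -(2 * U.u x * U.d x))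
      ≤ ∫ x in Ioi (0:ℝ), (a * U.d x ^ 2 + a⁻¹ * U.u x ^ 2) := h2
    _ = a * (∫ x in Ioi (0:ℝ), U.d x ^ 2) + a⁻¹ * ∫ x in Ioi (0:ℝ), U.u x ^ 2 := by
        rw [MeasureTheory.integral_add (U.hintd.const_mul a).integrableOn
          (U.hint2.const_mul a⁻¹).integrableOn, integral_const_mul, integral_const_mul]

lemma uL_sq_le {a : ℝ} (ha : 0 < a) :
    U.uL ^ 2 ≤ a * (∫ x in Iio (0:ℝ), U.d x ^ 2) + a⁻¹ * ∫ x in Iio (0:ℝ), U.u x ^ 2 := by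
  have h1 : U.uL ^ 2 = ∫ x in Iio (0:ℝ), 2 * U.u x * U.d x := U.integral_left.symm
  have h2 : (∫ x in Iio (0:ℝ), 2 * U.u x * U.d x) ≤
      ∫ x in Iio (0:ℝ), (a * U.d x ^ 2 + a⁻¹ * U.u x ^ 2) := by
    apply integral_mono U.integrable_mul.integrableOn
      ((U.hintd.const_mul a).add (U.hint2.const_mul a⁻¹)).integrableOn
    intro x
    simp only [Pi.add_apply]
    have h2 : 0 ≤ (a * U.d x - U.u x) ^ 2 / a := div_nonneg (sq_nonneg _) ha.le
    have h3 : (a * U.d x - U.u x) ^ 2 / a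
        = a * U.d x ^ 2 - 2 * U.u x * U.d x + a⁻¹ * U.u x ^ 2 := by
      field_simp; ring
    linarith [h3 ▸ h2]
  rw [h1]
  calc (∫ x in Iio (0:ℝ), 2 * U.u x * U.d x)
      ≤ ∫ x in Iio (0:ℝ), (a * U.d x ^ 2 + a⁻¹ * U.u x ^ 2) := h2
    _ = a * (∫ x in Iio (0:ℝ), U.d x ^ 2) + a⁻¹ * ∫ x in Iio (0:ℝ), U.u x ^ 2 := by
        rw [MeasureTheory.integral_add (U.hintd.const_mul a).integrableOn
          (U.hint2.const_mul a⁻¹).integrableOn, integral_const_mul, integral_const_mul]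

lemma l2Sq_split : l2Sq U.u = (∫ x in Iio (0:ℝ), U.u x ^ 2) + ∫ x in Ioi (0:ℝ), U.u x ^ 2 := by
  have := MeasureTheory.integral_add_compl (measurableSet_Iio (a := (0:ℝ))) U.hint2
  rw [compl_Iio, MeasureTheory.integral_Ici_eq_integral_Ioi] at this
  rw [l2Sq, ← this]

lemma l2Sq_nonneg : 0 ≤ l2Sq U.u := integral_nonneg fun x => sq_nonneg _

lemma dnormSq_nonneg : 0 ≤ dnormSq U.d :=
  add_nonneg (integral_nonneg fun x => sq_nonneg _) (integral_nonneg fun x => sq_nonneg _)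

lemma lpP_nonneg : 0 ≤ lpP μ U.u :=
  integral_nonneg fun x => Real.rpow_nonneg (abs_nonneg _) _

/-- The coercive quadratic part is nonnegative under the frequency condition. -/
lemma quad_nonneg (hv : 0 < v) (hω : ω > v ^ 2 / (τ ^ 2 + 1) ^ 2) :
    0 ≤ dnormSq U.d - v * U.uL ^ 2 + ω * l2Sq U.u := by
  have hτ1 : (0:ℝ) < τ ^ 2 + 1 := by positivity
  set a : ℝ := (τ ^ 2 + 1) / v with hadef
  have ha : 0 < a := div_pos hτ1 hv
  have hR := U.uR_sq_le ha
  have hL := U.uL_sq_le ha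
  have hsplit := U.l2Sq_split
  have hjump : U.uR ^ 2 = τ ^ 2 * U.uL ^ 2 := by rw [U.hjump]; ring
  -- (1 + τ²) uL² ≤ a * dnormSq + a⁻¹ * l2Sq
  have hsum : (1 + τ ^ 2) * U.uL ^ 2 ≤ a * dnormSq U.d + a⁻¹ * l2Sq U.u := by
    rw [dnormSq, hsplit]
    nlinarith [hR, hL, hjump]
  have hainv : a⁻¹ = v / (τ ^ 2 + 1) := by
    rw [hadef]; field_simp
  have hva : v / (τ ^ 2 + 1) * a = 1 := by
    rw [hadef]; field_simp
  have hvainv : v / (τ ^ 2 + 1) * a⁻¹ = v ^ 2 / (τ ^ 2 + 1) ^ 2 := by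
    rw [hainv]; field_simp
  -- multiply hsum by v / (τ²+1) > 0
  have hmul : v * U.uL ^ 2 ≤ dnormSq U.d + v ^ 2 / (τ ^ 2 + 1) ^ 2 * l2Sq U.u := by
    have hpos : 0 < v / (τ ^ 2 + 1) := div_pos hv hτ1
    have := mul_le_mul_of_nonneg_left hsum hpos.le
    calc v * U.uL ^ 2 = v / (τ ^ 2 + 1) * ((1 + τ ^ 2) * U.uL ^ 2) := by
          field_simp; ring
      _ ≤ v / (τ ^ 2 + 1) * (a * dnormSq U.d + a⁻¹ * l2Sq U.u) := this
      _ = (v / (τ ^ 2 + 1) * a) * dnormSq U.d + (v / (τ ^ 2 + 1) * a⁻¹) * l2Sq U.u := by ring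
      _ = dnormSq U.d + v ^ 2 / (τ ^ 2 + 1) ^ 2 * l2Sq U.u := by rw [hva, hvainv]; ring
  nlinarith [U.l2Sq_nonneg, hmul, hω]

/-- Scaling of an `HtauFun` by a constant. -/
def smul (β : ℝ) (U : HtauFun τ μ) : HtauFun τ μ where
  u := fun x => β * U.u x
  d := fun x => β * U.d x
  uL := β * U.uL
  uR := β * U.uR
  hderiv := fun x hx => (U.hderiv x hx).const_mul β
  hlimL := U.hlimL.const_mul β
  hlimR := U.hlimR.const_mul β
  hint2 := by
    have : (fun x => (β * U.u x) ^ 2) = fun x => β ^ 2 * U.u x ^ 2 := by funext x; ring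
    rw [this]; exact U.hint2.const_mul _
  hintd := by
    have : (fun x => (β * U.d x) ^ 2) = fun x => β ^ 2 * U.d x ^ 2 := by funext x; ring
    rw [this]; exact U.hintd.const_mul _
  hintp := by
    have : (fun x => |β * U.u x| ^ (2 * μ + 2)) =
        fun x => |β| ^ (2 * μ + 2) * |U.u x| ^ (2 * μ + 2) := by
      funext x; rw [abs_mul, Real.mul_rpow (abs_nonneg _) (abs_nonneg _)]
    rw [this]; exact U.hintp.const_mul _
  hjump := by rw [U.hjump]; ring

lemma smul_l2Sq (β : ℝ) : l2Sq (smul β U).u = β ^ 2 * l2Sq U.u := by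
  show l2Sq (fun x => β * U.u x) = _
  rw [l2Sq, l2Sq]
  have : (fun x => (β * U.u x) ^ 2) = fun x => β ^ 2 * U.u x ^ 2 := by funext x; ring
  rw [this, integral_const_mul]

lemma smul_dnormSq (β : ℝ) : dnormSq (smul β U).d = β ^ 2 * dnormSq U.d := by
  show dnormSq (fun x => β * U.d x) = _
  rw [dnormSq, dnormSq]
  have : (fun x => (β * U.d x) ^ 2) = fun x => β ^ 2 * U.d x ^ 2 := by funext x; ring
  rw [this, integral_const_mul, integral_const_mul]; ring

lemma smul_lpP {β : ℝ} (hβ : 0 ≤ β) : lpP μ (smul β U).u = β ^ (2 * μ + 2) * lpP μ U.u := by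
  show lpP μ (fun x => β * U.u x) = _
  rw [lpP, lpP]
  have : (fun x => |β * U.u x| ^ (2 * μ + 2)) =
      fun x => β ^ (2 * μ + 2) * |U.u x| ^ (2 * μ + 2) := by
    funext x
    rw [abs_mul, Real.mul_rpow (abs_nonneg _) (abs_nonneg _), abs_of_nonneg hβ]
  rw [this, integral_const_mul]

lemma smul_nonzero {β : ℝ} (hβ : β ≠ 0) (h : Nonzero U) : Nonzero (smul β U) := by
  intro hcon
  apply h
  filter_upwards [hcon] with x hx
  have : β * U.u x = 0 := hx
  exact (mul_eq_zero.1 this).resolve_left hβ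

end HtauFun

/-- along any minimizing sequence for `S̃` over `{I_ω ≤ 0}`,
the Nehari functional tends to `0`. -/
theorem minimizing_sequence_nehari_limit
    (τ v ω μ : ℝ) (hτ0 : τ ≠ 0) (hτ1 : τ ≠ 1) (hτm1 : τ ≠ -1)
    (hv : 0 < v) (hμ : 0 < μ) (hω : ω > v ^ 2 / (τ ^ 2 + 1) ^ 2)
    (U : ℕ → HtauFun τ μ) (hnz : ∀ n, Nonzero (U n))
    (hI : ∀ n, Ifun v ω μ (U n).u (U n).d (U n).uL ≤ 0)
    (hS : Tendsto (fun n => StilF μ (U n).u) atTop (nhds (dInf' τ v ω μ))) :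
    Tendsto (fun n => Ifun v ω μ (U n).u (U n).d (U n).uL) atTop (nhds 0) := by
  set c : ℝ := μ / (2 * (μ + 1)) with hc
  have hcpos : 0 < c := by positivity
  have hbddS : BddBelow {r : ℝ | ∃ V : HtauFun τ μ, Nonzero V ∧
      Ifun v ω μ V.u V.d V.uL ≤ 0 ∧ r = StilF μ V.u} := by
    refine ⟨0, fun r hr => ?_⟩
    obtain ⟨V, -, -, rfl⟩ := hr
    have := V.lpP_nonneg
    rw [StilF]
    positivity
  have key : ∀ ε : ℝ, 0 < ε →
      ∀ᶠ n in atTop, -ε < Ifun v ω μ (U n).u (U n).d (U n).uL := by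
    intro ε hε
    by_contra hcon
    rw [Filter.not_eventually] at hcon
    have hfreq : ∃ᶠ n in atTop, Ifun v ω μ (U n).u (U n).d (U n).uL ≤ -ε :=
      hcon.mono fun n hn => not_lt.1 hn
    have hev : ∀ᶠ n in atTop, StilF μ (U n).u < dInf' τ v ω μ + c * ε / 2 :=
      hS.eventually (eventually_lt_nhds (by nlinarith))
    obtain ⟨n, hIn, hSn⟩ := (hfreq.and_eventually hev).exists
    set L : ℝ := lpP μ (U n).u with hLdef
    set Q : ℝ := dnormSq (U n).d - v * (U n).uL ^ 2 + ω * l2Sq (U n).u with hQdef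
    have hQ : 0 ≤ Q := (U n).quad_nonneg hv hω
    have hIn' : Q - L ≤ -ε := by
      have h := hIn
      rw [Ifun] at h
      rw [hQdef, hLdef]
      linarith
    have hLε : ε ≤ L := by linarith
    have hLpos : 0 < L := lt_of_lt_of_le hε hLε
    set b : ℝ := 1 - ε / (2 * L) with hb
    have hb0 : 0 < b := by
      rw [hb]
      have h1 : ε / (2 * L) < 1 := by
        rw [div_lt_one (by linarith)]
        linarith
      linarith
    have hb1 : b < 1 := by
      rw [hb]
      have : 0 < ε / (2 * L) := by positivity
      linarith
    set β : ℝ := b ^ (1 / (2 * μ)) with hβdef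
    have hβ0 : 0 < β := Real.rpow_pos_of_pos hb0 _
    have hβ1 : β ≤ 1 := Real.rpow_le_one hb0.le hb1.le (by positivity)
    have h2μ : (2 * μ) ≠ 0 := by positivity
    have hβ2μ : β ^ (2 * μ) = b := by
      rw [hβdef, ← Real.rpow_mul hb0.le, one_div, inv_mul_cancel₀ h2μ, Real.rpow_one]
    have hβp : β ^ (2 * μ + 2) = b * β ^ 2 := by
      rw [Real.rpow_add hβ0, hβ2μ, Real.rpow_two]
    set V : HtauFun τ μ := HtauFun.smul β (U n) with hVdef
    have hnzV : Nonzero V := (U n).smul_nonzero hβ0.ne' (hnz n)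
    have hVuL : V.uL = β * (U n).uL := rfl
    have hIV : Ifun v ω μ V.u V.d V.uL ≤ 0 := by
      have heq : Ifun v ω μ V.u V.d V.uL = β ^ 2 * Q - b * β ^ 2 * L := by
        rw [Ifun, (U n).smul_dnormSq β, (U n).smul_l2Sq β,
          (U n).smul_lpP hβ0.le, hβp, ← hLdef, hVuL, hQdef]
        ring
      rw [heq]
      have hbL : b * L = L - ε / 2 := by
        rw [hb]; field_simp
      have hβsq : (0:ℝ) ≤ β ^ 2 := sq_nonneg β
      calc β ^ 2 * Q - b * β ^ 2 * L = β ^ 2 * (Q - (L - ε / 2)) := by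
            linear_combination (-(β ^ 2)) * hbL
        _ ≤ β ^ 2 * 0 := by
            apply mul_le_mul_of_nonneg_left _ hβsq
            linarith
        _ = 0 := by ring
    have hmem : StilF μ V.u ∈ {r : ℝ | ∃ W : HtauFun τ μ, Nonzero W ∧
        Ifun v ω μ W.u W.d W.uL ≤ 0 ∧ r = StilF μ W.u} := ⟨V, hnzV, hIV, rfl⟩
    have hd : dInf' τ v ω μ ≤ StilF μ V.u := csInf_le hbddS hmem
    have hSV : StilF μ V.u ≤ StilF μ (U n).u - c * ε / 2 := by
      have h1 : StilF μ V.u = c * (b * β ^ 2 * L) := by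
        rw [StilF, (U n).smul_lpP hβ0.le, hβp]
      have h2 : StilF μ (U n).u = c * L := by rw [StilF, ← hLdef]
      have hbL : b * L = L - ε / 2 := by rw [hb]; field_simp
      rw [h1, h2]
      have hβ2le : β ^ 2 ≤ 1 := by
        calc β ^ 2 ≤ 1 ^ 2 := pow_le_pow_left₀ hβ0.le hβ1 2
          _ = 1 := one_pow 2
      have hbLpos : 0 < b * L := mul_pos hb0 hLpos
      calc c * (b * β ^ 2 * L) = c * (b * L) * β ^ 2 := by ring
        _ ≤ c * (b * L) * 1 := by
            apply mul_le_mul_of_nonneg_left hβ2le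
            positivity
        _ = c * (L - ε / 2) := by rw [← hbL]; ring
        _ = c * L - c * ε / 2 := by ring
    linarith
  rw [tendsto_order]
  constructor
  · intro a ha
    have := key (-a) (by linarith)
    simpa using this
  · intro a ha
    exact .of_forall fun n => lt_of_le_of_lt (hI n) ha
end
end
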